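/- Let r ≥ 1 and m ≥ 1 be integers. Let S ⊆ A(r,m) be a pierced simplex, and for each l ∈ {1,…,r} let t_l > 0 be such that t_l·e_l ∈ conv(S). Then every point s ∈ S satisfies ∑_{l=1}^r s_l/t_l = 1; consequently, the affine hull of S equals the hyperplane {x ∈ ℝ^r : ∑_{l=1}^r x_l/t_l = 1}. -/

import Mathlib

/-- The point `a_{i,j,k}` of the construction `A(r,m)` (indices `i,j,k` are 1-based). -/
noncomputable def pt (r m i j k : ℕ) : Fin r → ℝ := fun l =>
  if (l : ℕ) + 1 = i then
    (∑ l' ∈ Finset.Icc (j + 1) r, (m : ℝ) ^ (2 * r - 2 * l' + 3))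
      + ((r - j : ℕ) : ℝ) * (m : ℝ) + (k : ℝ)
  else if j + 1 ≤ (l : ℕ) + 1 then
    -((m : ℝ) ^ (2 * r - 2 * ((l : ℕ) + 1) + 3))
  else 0

/-- The point set `A(r,m) ⊆ ℝ^r`. -/
def Apts (r m : ℕ) : Set (Fin r → ℝ) :=
  {x | ∃ i j k : ℕ, 1 ≤ i ∧ i ≤ j ∧ j ≤ r ∧ 1 ≤ k ∧ k ≤ m ∧ x = pt r m i j k}

/-- The set `C_i` of points of `A(r,m)` of color `i`. -/
def colorSet (r m i : ℕ) : Set (Fin r → ℝ) :=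
  {x | ∃ j k : ℕ, 1 ≤ i ∧ i ≤ j ∧ j ≤ r ∧ 1 ≤ k ∧ k ≤ m ∧ x = pt r m i j k}

/-- The set `L_j` of points of `A(r,m)` of layer `j`. -/
def layerSet (r m j : ℕ) : Set (Fin r → ℝ) :=
  {x | ∃ i k : ℕ, 1 ≤ i ∧ i ≤ j ∧ j ≤ r ∧ 1 ≤ k ∧ k ≤ m ∧ x = pt r m i j k}

/-- A set `S ⊆ ℝ^r` is pierced if its convex hull meets the line `ℝ·1_r`. -/
def Pierced {r : ℕ} (S : Set (Fin r → ℝ)) : Prop :=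
  ∃ c : ℝ, (fun _ => c : Fin r → ℝ) ∈ convexHull ℝ S

/-- The `i`-th standard basis vector of `ℝ^r` (1-based index). -/
def stdVec (r i : ℕ) : Fin r → ℝ := fun l => if (l : ℕ) + 1 = i then 1 else 0

/-- the affine hull of a pierced simplex is the hyperplane
`∑_l x_l / t_l = 1`, and every point of `S` satisfies this equation. -/
theorem affine_hull_hyperplane
    (r m : ℕ) (hr : 1 ≤ r) (hm : 1 ≤ m)
    (S : Set (Fin r → ℝ)) (hSA : S ⊆ Apts r m) (hS : Pierced S) (hcard : S.ncard = r)
    (t : ℕ → ℝ) (ht : ∀ l : ℕ, 1 ≤ l → l ≤ r →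
      0 < t l ∧ t l • stdVec r l ∈ convexHull ℝ S) :
    (∀ s ∈ S, (∑ l : Fin r, s l / t ((l : ℕ) + 1)) = 1) ∧
    (affineSpan ℝ S : Set (Fin r → ℝ)) =
      {x : Fin r → ℝ | (∑ l : Fin r, x l / t ((l : ℕ) + 1)) = 1} := by
  classical
  set v : Fin r → (Fin r → ℝ) := fun l => t ((l : ℕ) + 1) • stdVec r ((l : ℕ) + 1) with hv
  have hlb : ∀ l : Fin r, 1 ≤ (l : ℕ) + 1 := fun l => Nat.le_add_left 1 l
  have hub : ∀ l : Fin r, (l : ℕ) + 1 ≤ r := fun l => l.isLt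
  have htpos : ∀ l : Fin r, 0 < t ((l : ℕ) + 1) := fun l => (ht _ (hlb l) (hub l)).1
  have htne : ∀ l : Fin r, t ((l : ℕ) + 1) ≠ 0 := fun l => (htpos l).ne'
  have hvmem : ∀ l : Fin r, v l ∈ convexHull ℝ S := fun l => (ht _ (hlb l) (hub l)).2
  have hvcoord : ∀ l l' : Fin r, v l l' = if l' = l then t ((l : ℕ) + 1) else 0 := by
    intro l l'
    simp only [hv, Pi.smul_apply, stdVec, smul_eq_mul]
    by_cases h : l' = l
    · simp [h]
    · have h2 : (l' : ℕ) + 1 ≠ (l : ℕ) + 1 := by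
        simpa [Fin.ext_iff] using h
      simp [h, h2, Fin.val_inj]
  let F : (Fin r → ℝ) →ₗ[ℝ] ℝ :=
    { toFun := fun x => ∑ l : Fin r, x l / t ((l : ℕ) + 1)
      map_add' := by intro x y; simp [add_div, Finset.sum_add_distrib]
      map_smul' := by intro c x; simp [Finset.mul_sum, mul_div_assoc] }
  have hFv : ∀ l : Fin r, F (v l) = 1 := by
    intro l
    show (∑ l' : Fin r, v l l' / t ((l' : ℕ) + 1)) = 1
    rw [Finset.sum_eq_single l]
    · rw [hvcoord l l]; simp [div_self (htne l)]
    · intro b _ hb; rw [hvcoord l b]; simp [hb]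
    · simp
  have hFspan : ∀ x ∈ (affineSpan ℝ (Set.range v) : Set (Fin r → ℝ)), F x = 1 := by
    intro x hx
    obtain ⟨s, w, hw, rfl⟩ := eq_affineCombination_of_mem_affineSpan hx
    rw [s.affineCombination_eq_linear_combination _ _ hw, map_sum]
    simp only [map_smul, smul_eq_mul, hFv, mul_one]
    exact hw
  have hmemB : ∀ x : Fin r → ℝ, F x = 1 → x ∈ (affineSpan ℝ (Set.range v) : Set (Fin r → ℝ)) := by
    intro x hx
    have hw : ∑ l : Fin r, x l / t ((l : ℕ) + 1) = 1 := hx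
    have hxeq : (Finset.univ.affineCombination ℝ v fun l => x l / t ((l : ℕ) + 1)) = x := by
      rw [Finset.univ.affineCombination_eq_linear_combination _ _ hw]
      funext l'
      rw [Finset.sum_apply]
      rw [Finset.sum_eq_single l']
      · rw [Pi.smul_apply, hvcoord l' l']
        simp [div_mul_cancel₀ _ (htne l')]
      · intro b _ hb
        rw [Pi.smul_apply, hvcoord b l', if_neg (fun h' => hb h'.symm)]
        simp
      · simp
    have hmem := affineCombination_mem_affineSpan hw v
    rwa [hxeq] at hmem
  have hvS : ∀ l : Fin r, v l ∈ (affineSpan ℝ S : Set (Fin r → ℝ)) :=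
    fun l => convexHull_subset_affineSpan S (hvmem l)
  have hle : affineSpan ℝ (Set.range v) ≤ affineSpan ℝ S := by
    apply affineSpan_le.2
    rintro _ ⟨l, rfl⟩
    exact hvS l
  have hvind : AffineIndependent ℝ v := by
    rw [affineIndependent_iff]
    intro s w hw0 hwsum i hi
    have h := congrFun hwsum i
    rw [Finset.sum_apply] at h
    have hz : ∀ b ∈ s, b ≠ i → (w b • v b) i = 0 := by
      intro b _ hb
      rw [Pi.smul_apply, hvcoord b i, if_neg (fun h' => hb h'.symm)]
      simp
    rw [Finset.sum_eq_single_of_mem i hi hz, Pi.smul_apply, hvcoord i i, if_pos rfl,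
      Pi.zero_apply, smul_eq_mul] at h
    exact (mul_eq_zero.1 h).resolve_right (htne i)
  have hcard' : Fintype.card (Fin r) = (r - 1) + 1 := by
    simp only [Fintype.card_fin]; omega
  have hfr1 : Module.finrank ℝ (vectorSpan ℝ (Set.range v)) = r - 1 :=
    hvind.finrank_vectorSpan hcard'
  have hSfin : S.Finite := Set.finite_of_ncard_ne_zero (by omega)
  haveI := hSfin.fintype
  have hScard : Fintype.card S = r := by
    rw [← Nat.card_eq_fintype_card, Nat.card_coe_set_eq, hcard]
  obtain ⟨e⟩ : Nonempty (S ≃ Fin r) := ⟨Fintype.equivFinOfCardEq hScard⟩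
  set p : Fin r → (Fin r → ℝ) := fun i => ((e.symm i : S) : Fin r → ℝ) with hp
  have hrangep : Set.range p = S := by
    have h1 : p = (Subtype.val : S → (Fin r → ℝ)) ∘ e.symm := rfl
    rw [h1, Set.range_comp, Equiv.range_eq_univ, Set.image_univ, Subtype.range_coe]
  have hfr2 : Module.finrank ℝ (vectorSpan ℝ S) ≤ r - 1 := by
    rw [← hrangep]
    exact finrank_vectorSpan_range_le ℝ p hcard'
  have hdirle : (affineSpan ℝ (Set.range v)).direction ≤ (affineSpan ℝ S).direction :=
    AffineSubspace.direction_le hle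
  rw [direction_affineSpan, direction_affineSpan] at hdirle
  have hdeq : vectorSpan ℝ (Set.range v) = vectorSpan ℝ S :=
    Submodule.eq_of_le_of_finrank_le hdirle (by rw [hfr1]; exact hfr2)
  have hspan_eq : affineSpan ℝ (Set.range v) = affineSpan ℝ S := by
    apply AffineSubspace.ext_of_direction_eq
    · rw [direction_affineSpan, direction_affineSpan]; exact hdeq
    · exact ⟨v ⟨0, hr⟩, subset_affineSpan ℝ _ ⟨⟨0, hr⟩, rfl⟩, hvS ⟨0, hr⟩⟩
  have hsetEq : (affineSpan ℝ S : Set (Fin r → ℝ)) =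
      {x : Fin r → ℝ | (∑ l : Fin r, x l / t ((l : ℕ) + 1)) = 1} := by
    rw [← hspan_eq]
    ext x
    exact ⟨fun hx => hFspan x hx, fun hx => hmemB x hx⟩
  refine ⟨?_, hsetEq⟩
  intro s hs
  have hmem : s ∈ (affineSpan ℝ S : Set (Fin r → ℝ)) := subset_affineSpan ℝ S hs
  rw [hsetEq] at hmem
  exact hmem
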